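/- For any partition λ and any nonzero integer n, the power sum p_n(q^{λ+ρ}) := Σ_{j=1}^{l(λ)} (q^{n(λ_j - j + 1/2)} - q^{n(-j + 1/2)}) + 1/(q^{n/2} - q^{-n/2}) satisfies p_n(q^{λ+ρ}) = -p_n(q^{λ^t + ρ})|_{q → q^{-1}}, i.e., substituting q ↦ q^{-1} in the same expression formed from the conjugate partition λ^t yields the negative. -/

import Mathlib

/-- `u = q^{1/2}`, an indeterminate of the field `ℚ(q^{1/2})` (so `q^a = u^(2a)`). -/
noncomputable def stmt11u : RatFunc ℚ := RatFunc.X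

/-- For any partition `λ` (an antitone `f : ℕ → ℕ` vanishing from index `l` on, with
conjugate `g = λ^t` of length `f 0`) and any nonzero integer `n`, the power sum
`p_n(q^{λ+ρ}) = ∑_{j=1}^{l(λ)} (q^{n(λ_j-j+1/2)} - q^{n(-j+1/2)}) + 1/(q^{n/2}-q^{-n/2})`
satisfies `p_n(q^{λ+ρ}) = - p_n(q^{λ^t+ρ})|_{q → q^{-1}}` (the substitution `q ↦ q⁻¹`
negates every exponent of `u`). -/
theorem stmt11 (f : ℕ → ℕ) (hf : Antitone f) (l : ℕ) (hl : ∀ i, l ≤ i → f i = 0)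
    (g : ℕ → ℕ) (hg : ∀ i, g i = ((Finset.range l).filter (fun j => i + 1 ≤ f j)).card)
    (n : ℤ) (hn : n ≠ 0) :
    ((∑ j ∈ Finset.range l,
        (stmt11u ^ ((2 * (f j : ℤ) - 2 * ((j : ℤ) + 1) + 1) * n)
          - stmt11u ^ ((-2 * ((j : ℤ) + 1) + 1) * n)))
      + (stmt11u ^ n - stmt11u ^ (-n))⁻¹)
    = - ((∑ j ∈ Finset.range (f 0),
        (stmt11u ^ (-((2 * (g j : ℤ) - 2 * ((j : ℤ) + 1) + 1) * n))
          - stmt11u ^ (-((-2 * ((j : ℤ) + 1) + 1) * n))))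
      + (stmt11u ^ (-n) - stmt11u ^ n)⁻¹) := by
  set u := stmt11u with hu
  have hexp : ∀ a b : ℤ, a = b → u ^ a = u ^ b := fun a b h => by rw [h]
  -- membership characterization for the conjugate partition
  have hmem : ∀ k j : ℕ, j < g k ↔ j < l ∧ k < f j := by
    intro k j
    rw [hg]
    constructor
    · intro hj
      by_contra hcon
      push_neg at hcon
      rcases lt_or_ge j l with hjl | hjl
      · have hfj : f j ≤ k := hcon hjl
        have hsub : (Finset.range l).filter (fun m => k + 1 ≤ f m) ⊆ Finset.range j := by
          intro m hm
          simp only [Finset.mem_filter, Finset.mem_range] at hm ⊢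
          by_contra hmj
          push_neg at hmj
          have := hf hmj
          omega
        have := Finset.card_le_card hsub
        simp only [Finset.card_range] at this
        omega
      · have : ((Finset.range l).filter (fun m => k + 1 ≤ f m)).card ≤ l := by
          calc ((Finset.range l).filter (fun m => k + 1 ≤ f m)).card
              ≤ (Finset.range l).card := Finset.card_filter_le _ _
            _ = l := Finset.card_range l
        omega
    · rintro ⟨hjl, hfj⟩
      have hsub : Finset.range (j + 1) ⊆ (Finset.range l).filter (fun m => k + 1 ≤ f m) := by
        intro m hm
        simp only [Finset.mem_range] at hm
        simp only [Finset.mem_filter, Finset.mem_range]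
        refine ⟨by omega, le_trans hfj (hf (by omega))⟩
      have := Finset.card_le_card hsub
      simp only [Finset.card_range] at this
      omega
  set F : ℤ → RatFunc ℚ := fun m => u ^ ((2 * m + 1) * n) - u ^ ((2 * m - 1) * n) with hF
  -- telescoping for the left side
  have t1 : ∀ j : ℕ, ∑ k ∈ Finset.range (f j), F ((k : ℤ) - (j : ℤ))
      = u ^ ((2 * (f j : ℤ) - 2 * ((j : ℤ) + 1) + 1) * n) - u ^ ((-2 * ((j : ℤ) + 1) + 1) * n) := by
    intro j
    have h := Finset.sum_range_sub
      (f := fun k : ℕ => u ^ ((2 * (k : ℤ) - 2 * (j : ℤ) - 1) * n)) (n := f j)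
    calc ∑ k ∈ Finset.range (f j), F ((k : ℤ) - (j : ℤ))
        = ∑ k ∈ Finset.range (f j),
            (u ^ ((2 * ((k : ℤ) + 1) - 2 * (j : ℤ) - 1) * n)
              - u ^ ((2 * (k : ℤ) - 2 * (j : ℤ) - 1) * n)) := by
          refine Finset.sum_congr rfl fun k _ => ?_
          simp only [hF]
          congr 1 <;> apply hexp <;> push_cast <;> ring
      _ = u ^ ((2 * ((f j : ℤ)) - 2 * (j : ℤ) - 1) * n) - u ^ ((2 * (0 : ℤ) - 2 * (j : ℤ) - 1) * n) := by
          simpa using h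
      _ = _ := by congr 1 <;> apply hexp <;> push_cast <;> ring
  -- telescoping for the right side
  have t2 : ∀ j : ℕ, ∑ i ∈ Finset.range (g j), F ((j : ℤ) - (i : ℤ))
      = u ^ ((2 * (j : ℤ) + 1) * n) - u ^ ((2 * (j : ℤ) + 1 - 2 * (g j : ℤ)) * n) := by
    intro j
    have h := Finset.sum_range_sub'
      (f := fun i : ℕ => u ^ ((2 * (j : ℤ) - 2 * (i : ℤ) + 1) * n)) (n := g j)
    calc ∑ i ∈ Finset.range (g j), F ((j : ℤ) - (i : ℤ))
        = ∑ i ∈ Finset.range (g j),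
            (u ^ ((2 * (j : ℤ) - 2 * (i : ℤ) + 1) * n)
              - u ^ ((2 * (j : ℤ) - 2 * ((i : ℤ) + 1) + 1) * n)) := by
          refine Finset.sum_congr rfl fun i _ => ?_
          simp only [hF]
          congr 1 <;> apply hexp <;> push_cast <;> ring
      _ = u ^ ((2 * (j : ℤ) - 2 * (0 : ℤ) + 1) * n) - u ^ ((2 * (j : ℤ) - 2 * (g j : ℤ) + 1) * n) := by
          simpa using h
      _ = _ := by congr 1 <;> apply hexp <;> push_cast <;> ring
  -- the key bijection between the two double sums
  have key : ∑ j ∈ Finset.range l, ∑ k ∈ Finset.range (f j), F ((k : ℤ) - (j : ℤ))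
      = ∑ j ∈ Finset.range (f 0), ∑ i ∈ Finset.range (g j), F ((j : ℤ) - (i : ℤ)) := by
    rw [Finset.sum_sigma', Finset.sum_sigma']
    refine Finset.sum_nbij' (fun p => ⟨p.2, p.1⟩) (fun p => ⟨p.2, p.1⟩) ?_ ?_ ?_ ?_ ?_
    · rintro ⟨j, k⟩ hp
      simp only [Finset.mem_sigma, Finset.mem_range] at hp ⊢
      exact ⟨lt_of_lt_of_le hp.2 (hf (Nat.zero_le j)), (hmem k j).mpr ⟨hp.1, hp.2⟩⟩
    · rintro ⟨j, i⟩ hp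
      simp only [Finset.mem_sigma, Finset.mem_range] at hp ⊢
      exact ⟨((hmem j i).mp hp.2).1, ((hmem j i).mp hp.2).2⟩
    · rintro ⟨j, k⟩ _; rfl
    · rintro ⟨j, i⟩ _; rfl
    · rintro ⟨j, k⟩ _; rfl
  -- rewrite both sides
  have e1 : ∑ j ∈ Finset.range l,
      (u ^ ((2 * (f j : ℤ) - 2 * ((j : ℤ) + 1) + 1) * n) - u ^ ((-2 * ((j : ℤ) + 1) + 1) * n))
      = ∑ j ∈ Finset.range l, ∑ k ∈ Finset.range (f j), F ((k : ℤ) - (j : ℤ)) :=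
    Finset.sum_congr rfl fun j _ => (t1 j).symm
  have e2 : ∑ j ∈ Finset.range (f 0),
      (u ^ (-((2 * (g j : ℤ) - 2 * ((j : ℤ) + 1) + 1) * n)) - u ^ (-((-2 * ((j : ℤ) + 1) + 1) * n)))
      = ∑ j ∈ Finset.range (f 0), -(∑ i ∈ Finset.range (g j), F ((j : ℤ) - (i : ℤ))) := by
    refine Finset.sum_congr rfl fun j _ => ?_
    rw [t2 j, neg_sub]
    congr 1 <;> apply hexp <;> push_cast <;> ring
  rw [e1, e2, key, Finset.sum_neg_distrib]
  have hc : (u ^ (-n) - u ^ n)⁻¹ = -(u ^ n - u ^ (-n))⁻¹ := by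
    rw [← neg_sub, inv_neg]
  rw [hc]
  ring
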